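/- arXiv:2103.14868 — 2 statements merged into one kernel-verified Lean document; each statement's English description precedes it below -/
import Mathlib

section
/- Fix quaternions λ₁,…,λ_{ℓ+1} all lying in a common commutative slice ℂ_I, and define on ℂ_I the functions g_ℓ(z) = ∑_{n=ℓ-1}^∞ (zⁿ/n!) ∑_{|K|=n-ℓ+1} λ₁^{k₁}⋯λ_ℓ^{k_ℓ}. Then g_{ℓ+1}'(z) - g_{ℓ+1}(z)λ_{ℓ+1} = g_ℓ(z) for all z ∈ ℂ_I. -/
open Finset

private lemma aux_card (k n : ℕ) : (Finset.Nat.antidiagonalTuple k n).card ≤ (n + 1) ^ k := by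
  have hsub : Finset.Nat.antidiagonalTuple k n ⊆
      Fintype.piFinset fun _ : Fin k => Finset.range (n + 1) := by
    intro K hK
    rw [Finset.Nat.mem_antidiagonalTuple] at hK
    rw [Fintype.mem_piFinset]
    intro i
    rw [Finset.mem_range]
    have : K i ≤ n := hK ▸ Finset.single_le_sum (f := K)
      (fun _ _ => Nat.zero_le _) (Finset.mem_univ i)
    omega
  calc (Finset.Nat.antidiagonalTuple k n).card
      ≤ (Fintype.piFinset fun _ : Fin k => Finset.range (n + 1)).card :=
        Finset.card_le_card hsub
    _ = (n + 1) ^ k := by simp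

private lemma aux_norm (k n : ℕ) (f : Fin k → ℂ) (M : ℝ) (hM : ∀ i, ‖f i‖ ≤ M) (hM0 : 0 ≤ M) :
    ‖∑ K ∈ Finset.Nat.antidiagonalTuple k n, ∏ i, f i ^ K i‖ ≤ ((n : ℝ) + 1) ^ k * M ^ n := by
  calc ‖∑ K ∈ Finset.Nat.antidiagonalTuple k n, ∏ i, f i ^ K i‖
      ≤ ∑ K ∈ Finset.Nat.antidiagonalTuple k n, ‖∏ i, f i ^ K i‖ := norm_sum_le _ _
    _ ≤ ∑ _K ∈ Finset.Nat.antidiagonalTuple k n, M ^ n := by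
        apply Finset.sum_le_sum
        intro K hK
        rw [Finset.Nat.mem_antidiagonalTuple] at hK
        calc ‖∏ i, f i ^ K i‖ = ∏ i, ‖f i‖ ^ K i := by
              rw [norm_prod]; simp [norm_pow]
          _ ≤ ∏ i, M ^ K i := Finset.prod_le_prod (fun i _ => by positivity)
              (fun i _ => pow_le_pow_left₀ (norm_nonneg _) (hM i) _)
          _ = M ^ n := by rw [Finset.prod_pow_eq_pow_sum, hK]
    _ = ((Finset.Nat.antidiagonalTuple k n).card : ℝ) * M ^ n := by
        rw [Finset.sum_const, nsmul_eq_mul]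
    _ ≤ ((n : ℝ) + 1) ^ k * M ^ n := by
        apply mul_le_mul_of_nonneg_right _ (pow_nonneg hM0 n)
        exact_mod_cast aux_card k n

private lemma aux_summable (k j : ℕ) (f : Fin k → ℂ) (z : ℂ) :
    Summable fun n : ℕ => ‖(z ^ (n + j) / ((n + j).factorial : ℂ)) *
      ∑ K ∈ Finset.Nat.antidiagonalTuple k n, ∏ i, f i ^ K i‖ := by
  set M : ℝ := 1 + ∑ i, ‖f i‖ with hMdef
  have hM0 : 0 ≤ M := by positivity
  have hM : ∀ i, ‖f i‖ ≤ M := fun i =>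
    ((Finset.single_le_sum (fun i _ => norm_nonneg (f i)) (Finset.mem_univ i)).trans
      (le_add_of_nonneg_left zero_le_one))
  set R : ℝ := ‖z‖ + 1 with hRdef
  have hR1 : (1 : ℝ) ≤ R := le_add_of_nonneg_left (norm_nonneg z)
  have hzR : ‖z‖ ≤ R := by simp [hRdef]
  set Q : ℝ := (2 : ℝ) ^ k * M with hQdef
  refine Summable.of_nonneg_of_le (fun n => norm_nonneg _) (fun n => ?_)
    (((Real.summable_pow_div_factorial (R * Q)).mul_left (R ^ j)))
  have hcn := aux_norm k n f M hM hM0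
  have hpow : ((n : ℝ) + 1) ^ k ≤ ((2 : ℝ) ^ k) ^ n := by
    rw [← pow_mul, mul_comm, pow_mul]
    apply pow_le_pow_left₀ (by positivity)
    exact_mod_cast Nat.lt_two_pow_self (n := n)
  have hfact : (n.factorial : ℝ) ≤ ((n + j).factorial : ℝ) := by
    exact_mod_cast Nat.factorial_le (Nat.le_add_right n j)
  have hfn : (0 : ℝ) < n.factorial := by positivity
  calc ‖(z ^ (n + j) / ((n + j).factorial : ℂ)) *
        ∑ K ∈ Finset.Nat.antidiagonalTuple k n, ∏ i, f i ^ K i‖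
      = ‖z‖ ^ (n + j) / ((n + j).factorial : ℝ) *
        ‖∑ K ∈ Finset.Nat.antidiagonalTuple k n, ∏ i, f i ^ K i‖ := by
        rw [norm_mul, norm_div, norm_pow]
        simp
    _ ≤ R ^ (n + j) / (n.factorial : ℝ) * (((n : ℝ) + 1) ^ k * M ^ n) := by
        apply mul_le_mul _ hcn (norm_nonneg _) (by positivity)
        apply div_le_div₀ (by positivity) (pow_le_pow_left₀ (norm_nonneg z) hzR _) hfn hfact
    _ ≤ R ^ (n + j) / (n.factorial : ℝ) * (((2 : ℝ) ^ k) ^ n * M ^ n) := by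
        apply mul_le_mul_of_nonneg_left _ (by positivity)
        exact mul_le_mul_of_nonneg_right hpow (pow_nonneg hM0 n)
    _ = R ^ j * ((R * Q) ^ n / (n.factorial : ℝ)) := by
        rw [hQdef, mul_pow, mul_pow, pow_add]
        field_simp

open Finset

private lemma aux_split (k n : ℕ) (f : Fin (k + 1) → ℂ) :
    ∑ K ∈ Finset.Nat.antidiagonalTuple (k + 1) (n + 1), ∏ i, f i ^ K i =
      (∑ K ∈ Finset.Nat.antidiagonalTuple k (n + 1), ∏ i : Fin k, f i.castSucc ^ K i) +
      (∑ K ∈ Finset.Nat.antidiagonalTuple (k + 1) n, ∏ i, f i ^ K i) * f (Fin.last k) := by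
  classical
  rw [← Finset.sum_filter_add_sum_filter_not (Finset.Nat.antidiagonalTuple (k + 1) (n + 1))
    (fun K => K (Fin.last k) = 0)]
  congr 1
  · -- last coordinate zero
    refine Finset.sum_bij' (i := fun K _ => Fin.init K) (j := fun K _ => Fin.snoc K 0)
      ?_ ?_ ?_ ?_ ?_
    · intro K hK
      rw [Finset.mem_filter, Finset.Nat.mem_antidiagonalTuple] at hK
      rw [Finset.Nat.mem_antidiagonalTuple]
      obtain ⟨hsum, hlast⟩ := hK
      rw [Fin.sum_univ_castSucc, hlast, add_zero] at hsum
      simpa [Fin.init] using hsum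
    · intro K hK
      rw [Finset.Nat.mem_antidiagonalTuple] at hK
      rw [Finset.mem_filter, Finset.Nat.mem_antidiagonalTuple]
      constructor
      · rw [Fin.sum_univ_castSucc]
        simp [Fin.snoc_castSucc, Fin.snoc_last, hK]
      · simp [Fin.snoc_last]
    · intro K hK
      rw [Finset.mem_filter] at hK
      rw [← hK.2]
      exact Fin.snoc_init_self K
    · intro K _
      simp [Fin.init_snoc]
    · intro K hK
      rw [Finset.mem_filter] at hK
      rw [Fin.prod_univ_castSucc, hK.2, pow_zero, mul_one]
      exact Finset.prod_congr rfl fun i _ => by simp [Fin.init]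
  · -- last coordinate positive
    rw [Finset.sum_mul]
    refine Finset.sum_bij'
      (i := fun K _ => Function.update K (Fin.last k) (K (Fin.last k) - 1))
      (j := fun K _ => Function.update K (Fin.last k) (K (Fin.last k) + 1))
      ?_ ?_ ?_ ?_ ?_
    · intro K hK
      rw [Finset.mem_filter, Finset.Nat.mem_antidiagonalTuple] at hK
      rw [Finset.Nat.mem_antidiagonalTuple]
      obtain ⟨hsum, hlast⟩ := hK
      rw [Fin.sum_univ_castSucc] at hsum ⊢
      simp only [Function.update_self]
      rw [Finset.sum_congr rfl fun (i : Fin k) _ =>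
        (Function.update_of_ne (Fin.castSucc_lt_last i).ne _ K : _)]
      omega
    · intro K hK
      rw [Finset.Nat.mem_antidiagonalTuple] at hK
      rw [Finset.mem_filter, Finset.Nat.mem_antidiagonalTuple]
      rw [Fin.sum_univ_castSucc] at hK
      constructor
      · rw [Fin.sum_univ_castSucc]
        simp only [Function.update_self]
        rw [Finset.sum_congr rfl fun (i : Fin k) _ =>
          (Function.update_of_ne (Fin.castSucc_lt_last i).ne _ K : _)]
        omega
      · simp
    · intro K hK
      rw [Finset.mem_filter] at hK
      have hpos : K (Fin.last k) ≠ 0 := hK.2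
      funext x
      rcases eq_or_ne x (Fin.last k) with rfl | hx
      · simp only [Function.update_self]
        omega
      · simp [Function.update_of_ne hx]
    · intro K _
      funext x
      rcases eq_or_ne x (Fin.last k) with rfl | hx
      · simp [Function.update_self]
      · simp [Function.update_of_ne hx]
    · intro K hK
      rw [Finset.mem_filter] at hK
      have hpos : K (Fin.last k) ≠ 0 := hK.2
      rw [Fin.prod_univ_castSucc, Fin.prod_univ_castSucc]
      have hcs : ∀ i : Fin k,
          Function.update K (Fin.last k) (K (Fin.last k) - 1) i.castSucc = K i.castSucc :=
        fun i => Function.update_of_ne (Fin.castSucc_lt_last i).ne _ _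
      simp only [hcs, Function.update_self]
      rw [mul_assoc, ← pow_succ, Nat.sub_add_cancel (Nat.one_le_iff_ne_zero.2 hpos)]
/-- The recursion D_{λ_{ℓ+1}} g_{ℓ+1} = g_ℓ for generalized exponentials on a
commutative slice ℂ_I ≅ ℂ. -/
theorem stmt_9 (ℓ : ℕ) (hℓ : 1 ≤ ℓ) (lam : Fin (ℓ + 1) → ℂ)
    (g gsucc : ℂ → ℂ)
    (hgsucc : ∀ z, gsucc z = ∑' n : ℕ, z ^ (n + ℓ) / (n + ℓ).factorial *
      ∑ K ∈ Finset.Nat.antidiagonalTuple (ℓ + 1) n, ∏ i, lam i ^ K i)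
    (hg : ∀ z, g z = ∑' n : ℕ, z ^ (n + (ℓ - 1)) / (n + (ℓ - 1)).factorial *
      ∑ K ∈ Finset.Nat.antidiagonalTuple ℓ n, ∏ i : Fin ℓ, lam i.castSucc ^ K i) :
    ∀ z, HasDerivAt gsucc (g z + gsucc z * lam (Fin.last ℓ)) z := by
  obtain ⟨m, rfl⟩ : ∃ m, ℓ = m + 1 := ⟨ℓ - 1, (Nat.succ_pred_eq_of_pos hℓ).symm⟩
  intro z
  set c : ℕ → ℂ := fun n =>
    ∑ K ∈ Finset.Nat.antidiagonalTuple (m + 1 + 1) n, ∏ i, lam i ^ K i with hcdef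
  set b : ℕ → ℂ := fun n =>
    ∑ K ∈ Finset.Nat.antidiagonalTuple (m + 1) n,
      ∏ i : Fin (m + 1), lam i.castSucc ^ K i with hbdef
  set d : ℕ → ℂ := fun n =>
    match n with
    | 0 => 0
    | Nat.succ n => c n * lam (Fin.last (m + 1)) with hddef
  -- summabilities
  have hsum_c : ∀ (j : ℕ) (w : ℂ),
      Summable fun n : ℕ => w ^ (n + j) / ((n + j).factorial : ℂ) * c n :=
    fun j w => (aux_summable (m + 1 + 1) j lam w).of_norm
  have hsum_b : Summable fun n : ℕ => z ^ (n + m) / ((n + m).factorial : ℂ) * b n :=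
    (aux_summable (m + 1) m (fun i => lam i.castSucc) z).of_norm
  have hsum_d : Summable fun n : ℕ => z ^ (n + m) / ((n + m).factorial : ℂ) * d n := by
    apply (summable_nat_add_iff 1).mp
    have he : (fun n : ℕ => z ^ (n + 1 + m) / ((n + 1 + m).factorial : ℂ) * d (n + 1))
        = fun n : ℕ => (z ^ (n + (m + 1)) / ((n + (m + 1)).factorial : ℂ) * c n) *
            lam (Fin.last (m + 1)) := by
      funext n
      rw [show n + 1 + m = n + (m + 1) from by omega]
      simp only [hddef]
      ring
    rw [he]
    exact (hsum_c (m + 1) z).mul_right _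
  -- gsucc as explicit series
  have hgs : gsucc = fun w : ℂ =>
      ∑' n : ℕ, w ^ (n + (m + 1)) / ((n + (m + 1)).factorial : ℂ) * c n :=
    funext hgsucc
  -- the derivative of the series
  have key : HasDerivAt gsucc (∑' n : ℕ, z ^ (n + m) / ((n + m).factorial : ℂ) * c n) z := by
    rw [hgs]
    set w : ℂ := ((‖z‖ + 1 : ℝ) : ℂ) with hw
    have hzw : ‖z‖ < ‖w‖ := by
      rw [hw, Complex.norm_real, Real.norm_eq_abs, abs_of_nonneg (by positivity)]
      linarith
    have hzball : z ∈ Metric.ball (0 : ℂ) ‖w‖ := by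
      rw [Metric.mem_ball, dist_zero_right]; exact hzw
    refine hasDerivAt_tsum_of_isPreconnected
      (u := fun n => ‖w ^ (n + m) / ((n + m).factorial : ℂ) * c n‖)
      (g := fun n y => y ^ (n + (m + 1)) / ((n + (m + 1)).factorial : ℂ) * c n)
      (g' := fun n y => y ^ (n + m) / ((n + m).factorial : ℂ) * c n)
      (aux_summable (m + 1 + 1) m lam w) (Metric.isOpen_ball (x := (0 : ℂ)) (ε := ‖w‖))
      ((convex_ball _ _).isPreconnected) ?_ ?_ hzball (hsum_c (m + 1) z) hzball
    · intro n y _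
      have h1 : HasDerivAt (fun y : ℂ => y ^ (n + m + 1))
          ((n + m + 1 : ℕ) * y ^ (n + m)) y := by
        simpa using hasDerivAt_pow (n + m + 1) y
      have h2 := (h1.div_const (((n + m + 1).factorial : ℂ))).mul_const (c n)
      have h3 : ((n + m + 1 : ℕ) : ℂ) * y ^ (n + m) / ((n + m + 1).factorial : ℂ) * c n
          = y ^ (n + m) / ((n + m).factorial : ℂ) * c n := by
        have hne : ((n + m + 1 : ℕ) : ℂ) ≠ 0 :=
          Nat.cast_ne_zero.mpr (Nat.succ_ne_zero _)
        rw [Nat.factorial_succ, Nat.cast_mul, mul_div_mul_left _ _ hne]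
      rw [h3] at h2
      exact h2
    · intro n y hy
      rw [Metric.mem_ball, dist_zero_right] at hy
      rw [norm_mul, norm_mul, norm_div, norm_div, norm_pow, norm_pow]
      gcongr
  -- identify the derivative value
  have hd : ∀ n, c n = b n + d n := by
    intro n
    cases n with
    | zero =>
      simp only [hcdef, hbdef, hddef, Finset.Nat.antidiagonalTuple_zero_right]
      simp
    | succ n => exact aux_split (m + 1) n lam
  have hval : (∑' n : ℕ, z ^ (n + m) / ((n + m).factorial : ℂ) * c n)
      = g z + gsucc z * lam (Fin.last (m + 1)) := by
    calc ∑' n : ℕ, z ^ (n + m) / ((n + m).factorial : ℂ) * c n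
        = ∑' n : ℕ, (z ^ (n + m) / ((n + m).factorial : ℂ) * b n
            + z ^ (n + m) / ((n + m).factorial : ℂ) * d n) :=
          tsum_congr fun n => by rw [hd n, mul_add]
      _ = (∑' n : ℕ, z ^ (n + m) / ((n + m).factorial : ℂ) * b n)
            + ∑' n : ℕ, z ^ (n + m) / ((n + m).factorial : ℂ) * d n :=
          Summable.tsum_add hsum_b hsum_d
      _ = g z + gsucc z * lam (Fin.last (m + 1)) := by
          congr 1
          · exact (hg z).symm
          · rw [Summable.tsum_eq_zero_add hsum_d]
            have h0 : z ^ (0 + m) / (((0 + m).factorial : ℕ) : ℂ) * d 0 = 0 := by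
              simp [hddef]
            rw [h0, zero_add]
            have he : (fun n : ℕ => z ^ (n + 1 + m) / ((n + 1 + m).factorial : ℂ) * d (n + 1))
                = fun n : ℕ => (z ^ (n + (m + 1)) / ((n + (m + 1)).factorial : ℂ) * c n) *
                    lam (Fin.last (m + 1)) := by
              funext n
              rw [show n + 1 + m = n + (m + 1) from by omega]
              simp only [hddef]
              ring
            rw [he, tsum_mul_right, hgs]
  rw [hval] at key
  exact key
end

section
/- Let λ ∈ ℂ_I be a nonzero element of a commutative slice of ℍ and let h(z) = ∑_{n=0}^∞ zⁿaₙ with aₙ ∈ ℂ_I satisfying n!|aₙ| ≤ C(n+1)^d|λ|ⁿ. Then the function f(z) = ∑_{n=1}^∞ (zⁿ/n!) ∑_{k=0}^{n-1} k! aₖ λ^{n-k-1} satisfies f'(z) - f(z)λ = h(z) for all z ∈ ℂ_I, and f(0) = 0. -/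
open Filter Topology
lemma sum_aux (p : ℕ) {x : ℝ} (hx : 0 < x) :
    Summable (fun n : ℕ => ((n : ℝ)+1)^p * x^n / n.factorial) := by
  have hpos : ∀ n : ℕ, 0 < ((n : ℝ)+1)^p * x^n / n.factorial := by
    intro n; positivity
  apply summable_of_ratio_test_tendsto_lt_one (l := 0) one_pos
  · filter_upwards with n
    exact (hpos n).ne'
  · have key : (fun n : ℕ => ‖((n:ℝ)+2)^p * x^(n+1) / (n+1).factorial‖ /
        ‖((n : ℝ)+1)^p * x^n / n.factorial‖) =
        fun n : ℕ => (1 + 1/((n:ℝ)+1))^p * (x/((n:ℝ)+1)) := by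
      funext n
      have h1 : (0:ℝ) < ((n : ℝ)+1)^p * x^n / n.factorial := hpos n
      have h2 : (0:ℝ) ≤ ((n:ℝ)+2)^p * x^(n+1) / (n+1).factorial := by positivity
      rw [Real.norm_of_nonneg h2, Real.norm_of_nonneg h1.le]
      have hn1 : ((n:ℝ)+1) ≠ 0 := by positivity
      have hfac : ((n.factorial : ℝ)) ≠ 0 := by positivity
      have hstep : (((n+1).factorial : ℝ)) = ((n:ℝ)+1) * n.factorial := by
        rw [Nat.factorial_succ]; push_cast; ring
      have hxp : 1 + 1/((n:ℝ)+1) = ((n:ℝ)+2)/((n:ℝ)+1) := by field_simp; ring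
      rw [hxp, hstep, div_pow]
      field_simp
      ring
    have : Tendsto (fun n : ℕ => (1 + 1/((n:ℝ)+1))^p * (x/((n:ℝ)+1))) atTop (𝓝 0) := by
      have t1 : Tendsto (fun n : ℕ => 1/((n:ℝ)+1)) atTop (𝓝 0) :=
        tendsto_one_div_add_atTop_nhds_zero_nat
      have t2 : Tendsto (fun n : ℕ => (1 + 1/((n:ℝ)+1))^p) atTop (𝓝 1) := by
        have := ((tendsto_const_nhds : Tendsto (fun _ : ℕ => (1:ℝ)) atTop (𝓝 1)).add t1).pow p
        simpa using this
      have t3 : Tendsto (fun n : ℕ => x/((n:ℝ)+1)) atTop (𝓝 0) := by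
        have := t1.const_mul x
        simpa [div_eq_mul_inv, mul_comm] using this
      simpa using t2.mul t3
    refine this.congr' ?_
    filter_upwards with n
    have := congrFun key n
    push_cast at this ⊢
    rw [← this]
    ring_nf

/-- On a commutative slice ℂ_I ≅ ℂ, the function E_λ(h) solves f' - fλ = h, f(0) = 0. -/
theorem stmt_15 (lam : ℂ) (hlam : lam ≠ 0) (a : ℕ → ℂ) (C : ℝ) (hC : 0 < C) (d : ℕ)
    (hb : ∀ n : ℕ, (n.factorial : ℝ) * ‖a n‖ ≤ C * (n + 1) ^ d * ‖lam‖ ^ n)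
    (h f : ℂ → ℂ)
    (hh : ∀ z, h z = ∑' n : ℕ, z ^ n * a n)
    (hf : ∀ z, f z = ∑' n : ℕ, z ^ n / n.factorial *
      ∑ k ∈ Finset.range n, (k.factorial : ℂ) * a k * lam ^ (n - k - 1)) :
    (∀ z, HasDerivAt f (h z + f z * lam) z) ∧ f 0 = 0 := by
  have hM1 : 1 ≤ max ‖lam‖ 1 := le_max_right _ _
  set M : ℝ := max ‖lam‖ 1 with hM
  have hM0 : 0 < M := lt_of_lt_of_le one_pos hM1
  set S : ℕ → ℂ := fun n => ∑ k ∈ Finset.range n,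
    (k.factorial : ℂ) * a k * lam ^ (n - k - 1) with hS
  set c : ℕ → ℂ := fun n => S n / (n.factorial : ℂ) with hc
  have hfc : ∀ z, f z = ∑' n : ℕ, z ^ n * c n := by
    intro z
    rw [hf z]
    exact tsum_congr fun n => by simp only [hc, hS]; ring
  -- bound on a
  have hab : ∀ n : ℕ, ‖a n‖ ≤ C * ((n:ℝ)+1) ^ d * ‖lam‖ ^ n / n.factorial := by
    intro n
    have hfp : (0:ℝ) < n.factorial := by positivity
    rw [le_div_iff₀ hfp]
    calc ‖a n‖ * n.factorial = (n.factorial : ℝ) * ‖a n‖ := by ring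
      _ ≤ C * (n + 1) ^ d * ‖lam‖ ^ n := hb n
  -- bound on S
  have hSb : ∀ n : ℕ, ‖S n‖ ≤ C * ((n:ℝ)+1) ^ (d+1) * M ^ n := by
    intro n
    calc ‖S n‖ ≤ ∑ k ∈ Finset.range n, ‖(k.factorial : ℂ) * a k * lam ^ (n - k - 1)‖ :=
          norm_sum_le _ _
      _ ≤ ∑ _k ∈ Finset.range n, C * ((n:ℝ)+1) ^ d * M ^ (n-1) := by
          apply Finset.sum_le_sum
          intro k hk
          rw [Finset.mem_range] at hk
          rw [norm_mul, norm_mul, norm_pow, Complex.norm_natCast]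
          calc (k.factorial : ℝ) * ‖a k‖ * ‖lam‖ ^ (n-k-1)
              ≤ (C * (k + 1) ^ d * ‖lam‖ ^ k) * ‖lam‖ ^ (n-k-1) :=
                mul_le_mul_of_nonneg_right (hb k) (by positivity)
            _ = C * ((k:ℝ)+1) ^ d * ‖lam‖ ^ (n-1) := by
                rw [mul_assoc, ← pow_add, show k + (n-k-1) = n-1 from by omega]
            _ ≤ C * ((n:ℝ)+1) ^ d * M ^ (n-1) := by
                have hk1 : ((k:ℝ)+1) ^ d ≤ ((n:ℝ)+1) ^ d := by
                  apply pow_le_pow_left₀ (by positivity)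
                  have : (k:ℝ) ≤ (n:ℝ) := Nat.cast_le.mpr hk.le
                  linarith
                have h2 : ‖lam‖ ^ (n-1) ≤ M ^ (n-1) :=
                  pow_le_pow_left₀ (norm_nonneg lam) (le_max_left _ _) _
                calc C * ((k:ℝ)+1) ^ d * ‖lam‖ ^ (n-1)
                    ≤ C * ((n:ℝ)+1) ^ d * ‖lam‖ ^ (n-1) :=
                      mul_le_mul_of_nonneg_right
                        (mul_le_mul_of_nonneg_left hk1 hC.le) (by positivity)
                  _ ≤ C * ((n:ℝ)+1) ^ d * M ^ (n-1) :=
                      mul_le_mul_of_nonneg_left h2 (by positivity)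
      _ = (n:ℝ) * (C * ((n:ℝ)+1) ^ d * M ^ (n-1)) := by
          rw [Finset.sum_const, Finset.card_range, nsmul_eq_mul]
      _ ≤ ((n:ℝ)+1) * (C * ((n:ℝ)+1) ^ d * M ^ n) := by
          have h1 : M ^ (n-1) ≤ M ^ n := pow_le_pow_right₀ hM1 (Nat.sub_le n 1)
          calc (n:ℝ) * (C * ((n:ℝ)+1) ^ d * M ^ (n-1))
              ≤ (n:ℝ) * (C * ((n:ℝ)+1) ^ d * M ^ n) :=
                mul_le_mul_of_nonneg_left
                  (mul_le_mul_of_nonneg_left h1 (by positivity)) (Nat.cast_nonneg n)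
            _ ≤ ((n:ℝ)+1) * (C * ((n:ℝ)+1) ^ d * M ^ n) :=
                mul_le_mul_of_nonneg_right (by linarith) (by positivity)
      _ = C * ((n:ℝ)+1) ^ (d+1) * M ^ n := by rw [pow_succ]; ring
  have hcb : ∀ n : ℕ, ‖c n‖ ≤ C * ((n:ℝ)+1) ^ (d+1) * M ^ n / n.factorial := by
    intro n
    simp only [hc]
    rw [norm_div, Complex.norm_natCast]
    exact (div_le_div_iff_of_pos_right (by positivity : (0:ℝ) < n.factorial)).mpr (hSb n)
  -- recurrence
  have hrec : ∀ n : ℕ, ((n:ℂ)+1) * c (n+1) = a n + lam * c n := by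
    intro n
    have hfac : ((n.factorial : ℂ)) ≠ 0 := by
      exact_mod_cast Nat.cast_ne_zero.mpr n.factorial_ne_zero
    have hn1 : ((n:ℂ)+1) ≠ 0 := Nat.cast_add_one_ne_zero n
    have hSsucc : S (n+1) = (n.factorial : ℂ) * a n + lam * S n := by
      simp only [hS]
      rw [Finset.sum_range_succ, show n + 1 - n - 1 = 0 from by omega, pow_zero, mul_one,
        Finset.mul_sum, add_comm]
      congr 1
      apply Finset.sum_congr rfl
      intro k hk
      rw [Finset.mem_range] at hk
      rw [show n + 1 - k - 1 = (n - k - 1) + 1 from by omega, pow_succ]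
      ring
    have hfs : (((n+1).factorial : ℂ)) = ((n:ℂ)+1) * (n.factorial : ℂ) := by
      rw [Nat.factorial_succ]; push_cast; ring
    simp only [hc]
    rw [hfs, hSsucc]
    field_simp
  -- pointwise derivative machinery
  have hderiv : ∀ z, HasDerivAt f (h z + f z * lam) z := by
    intro z
    have hR1 : 1 ≤ ‖z‖ + 1 := le_add_of_nonneg_left (norm_nonneg z)
    set R : ℝ := ‖z‖ + 1 with hR
    have hR0 : 0 < R := lt_of_lt_of_le one_pos hR1
    set u : ℕ → ℝ := fun n => C * (((n:ℝ)+1) ^ (d+2) * (R*M) ^ n / n.factorial) with hu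
    have hu_sum : Summable u := (sum_aux (d+2) (by positivity)).mul_left C
    have hueq : ∀ n : ℕ, u n = ((n:ℝ)+1) * R ^ n * (C * ((n:ℝ)+1) ^ (d+1) * M ^ n / n.factorial) := by
      intro n
      simp only [hu]
      rw [mul_pow, pow_succ]
      ring
    have hgbound : ∀ (n : ℕ) (y : ℂ), y ∈ Metric.ball (0:ℂ) R →
        ‖(n:ℂ) * y ^ (n-1) * c n‖ ≤ u n := by
      intro n y hy
      rw [Metric.mem_ball, dist_zero_right] at hy
      rw [norm_mul, norm_mul, norm_pow, Complex.norm_natCast, hueq n]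
      have hyR : ‖y‖ ^ (n-1) ≤ R ^ n :=
        le_trans (pow_le_pow_left₀ (norm_nonneg y) hy.le _) (pow_le_pow_right₀ hR1 (Nat.sub_le n 1))
      have hnn : (0:ℝ) ≤ (n:ℝ) := Nat.cast_nonneg n
      exact mul_le_mul
        (mul_le_mul (by linarith) hyR (by positivity) (by linarith))
        (hcb n) (norm_nonneg _) (by positivity)
    have hg : ∀ (n : ℕ) (y : ℂ), y ∈ Metric.ball (0:ℂ) R →
        HasDerivAt (fun w => w ^ n * c n) ((n:ℂ) * y ^ (n-1) * c n) y :=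
      fun n y _ => (hasDerivAt_pow n y).mul_const (c n)
    have h0 : Summable (fun n : ℕ => (0:ℂ) ^ n * c n) := by
      apply summable_of_ne_finset_zero (s := ({0} : Finset ℕ))
      intro n hn
      rw [Finset.mem_singleton] at hn
      rw [zero_pow hn, zero_mul]
    have hzball : z ∈ Metric.ball (0:ℂ) R := by
      rw [Metric.mem_ball, dist_zero_right]
      simp only [hR]; linarith
    have hD := hasDerivAt_tsum_of_isPreconnected hu_sum Metric.isOpen_ball
      (convex_ball (0:ℂ) R).isPreconnected hg hgbound (Metric.mem_ball_self hR0) h0 hzball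
    -- summabilities at z
    have hzR : ‖z‖ ≤ R := by simp only [hR]; linarith
    have sumG : Summable (fun n : ℕ => (n:ℂ) * z ^ (n-1) * c n) :=
      Summable.of_norm_bounded hu_sum (fun n => hgbound n z hzball)
    have sumC : Summable (fun n : ℕ => z ^ n * c n) := by
      apply Summable.of_norm_bounded hu_sum
      intro n
      rw [norm_mul, norm_pow, hueq n]
      have hnn : (0:ℝ) ≤ (n:ℝ) := Nat.cast_nonneg n
      calc ‖z‖ ^ n * ‖c n‖ ≤ R ^ n * (C * ((n:ℝ)+1) ^ (d+1) * M ^ n / n.factorial) :=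
            mul_le_mul (pow_le_pow_left₀ (norm_nonneg z) hzR n) (hcb n)
              (norm_nonneg _) (by positivity)
        _ = 1 * (R ^ n * (C * ((n:ℝ)+1) ^ (d+1) * M ^ n / n.factorial)) := by ring
        _ ≤ ((n:ℝ)+1) * (R ^ n * (C * ((n:ℝ)+1) ^ (d+1) * M ^ n / n.factorial)) :=
            mul_le_mul_of_nonneg_right (by linarith) (by positivity)
        _ = ((n:ℝ)+1) * R ^ n * (C * ((n:ℝ)+1) ^ (d+1) * M ^ n / n.factorial) := by ring
    have sumA : Summable (fun n : ℕ => z ^ n * a n) := by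
      apply Summable.of_norm_bounded hu_sum
      intro n
      rw [norm_mul, norm_pow, hu]
      calc ‖z‖ ^ n * ‖a n‖ ≤ R ^ n * (C * ((n:ℝ)+1) ^ d * ‖lam‖ ^ n / n.factorial) :=
            mul_le_mul (pow_le_pow_left₀ (norm_nonneg z) hzR n) (hab n)
              (norm_nonneg _) (by positivity)
        _ ≤ C * (((n:ℝ)+1) ^ (d+2) * (R*M) ^ n / n.factorial) := by
            rw [mul_pow]
            have h1 : ((n:ℝ)+1) ^ d ≤ ((n:ℝ)+1) ^ (d+2) :=
              pow_le_pow_right₀ (by linarith [Nat.cast_nonneg (α := ℝ) n]) (by omega)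
            have h2 : ‖lam‖ ^ n ≤ M ^ n := pow_le_pow_left₀ (norm_nonneg lam) (le_max_left _ _) n
            calc R ^ n * (C * ((n:ℝ)+1) ^ d * ‖lam‖ ^ n / n.factorial)
                ≤ R ^ n * (C * ((n:ℝ)+1) ^ (d+2) * M ^ n / n.factorial) := by gcongr
              _ = C * (((n:ℝ)+1) ^ (d+2) * (R ^ n * M ^ n) / n.factorial) := by ring
    -- compute the derivative value
    have hval : (∑' n : ℕ, (n:ℂ) * z ^ (n-1) * c n) = h z + f z * lam := by
      rw [Summable.tsum_eq_zero_add sumG]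
      simp only [Nat.cast_zero, zero_mul, zero_add, Nat.cast_add, Nat.cast_one,
        Nat.add_sub_cancel]
      have e2 : ∀ n : ℕ, ((n:ℂ)+1) * z ^ n * c (n+1) = z ^ n * a n + lam * (z ^ n * c n) := by
        intro n
        rw [show ((n:ℂ)+1) * z ^ n * c (n+1) = z ^ n * (((n:ℂ)+1) * c (n+1)) from by ring,
          hrec n]
        ring
      rw [tsum_congr e2, Summable.tsum_add sumA (sumC.mul_left lam), tsum_mul_left]
      rw [hh z, hfc z]
      ring
    have hfun : f = fun w => ∑' n : ℕ, w ^ n * c n := funext hfc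
    have hD' : HasDerivAt f (∑' n : ℕ, (n:ℂ) * z ^ (n-1) * c n) z := by
      rw [hfun]; exact hD
    rw [← hval]
    exact hD'
  refine ⟨hderiv, ?_⟩
  rw [hf 0]
  have hz0 : ∀ n : ℕ, (0:ℂ) ^ n / n.factorial *
      ∑ k ∈ Finset.range n, (k.factorial : ℂ) * a k * lam ^ (n - k - 1) = 0 := by
    intro n
    cases n with
    | zero => simp
    | succ m => rw [zero_pow (Nat.succ_ne_zero m), zero_div, zero_mul]
  rw [tsum_congr hz0, tsum_zero]
end
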